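/- Let k ≥ 3, let r > 0, and let t : Fin k → EuclideanSpace ℝ (Fin n) be a tuple of pairwise distinct points with ‖t i‖ = r for all i that is collision-free. Then the number of equivalence classes—under the relation 's ≈ s' iff there exist g ∈ O(n) and a permutation σ of Fin k with s i = g (s' (σ i)) for all i'—of the set of tuples s : Fin k → EuclideanSpace ℝ (Fin n) of pairwise distinct points having the same second-moment data as t is at most (k choose 2)! / k! (read as a rational number). -/

import Mathlib

open RealInnerProductSpace
open scoped BigOperators

/-- Collision-free tuples. -/
def IsCollisionFree {n k : ℕ} (t : Fin k → EuclideanSpace ℝ (Fin n)) : Prop :=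
  ∀ i j l m : Fin k, i ≠ j → l ≠ m →
    (∃ g : EuclideanSpace ℝ (Fin n) ≃ₗᵢ[ℝ] EuclideanSpace ℝ (Fin n),
        ({g (t i), g (t j)} : Set (EuclideanSpace ℝ (Fin n))) = {t l, t m}) →
    ({t i, t j} : Set (EuclideanSpace ℝ (Fin n))) = {t l, t m}

/-- Pair data. -/
def pairData {n k : ℕ} (s : Fin k → EuclideanSpace ℝ (Fin n)) : Set (Sym2 ℝ × ℝ) :=
  { p | ∃ i j : Fin k, i < j ∧ p = (Sym2.mk (‖s i‖) (‖s j‖), ⟪s i, s j⟫) }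

/-- Norm data. -/
noncomputable def normData {n k : ℕ} (s : Fin k → EuclideanSpace ℝ (Fin n)) : Multiset ℝ :=
  Finset.univ.val.map fun i => ‖s i‖

/-- Same second-moment data. -/
def SameSecondMoment {n k : ℕ} (s t : Fin k → EuclideanSpace ℝ (Fin n)) : Prop :=
  normData s = normData t ∧ pairData s = pairData t

/-- `s ≈ s'` iff there exist `g ∈ O(n)` and a permutation `σ` of `Fin k`
with `s i = g (s' (σ i))` for all `i`. -/
def EquivRel {n k : ℕ} (S : Set (Fin k → EuclideanSpace ℝ (Fin n))) (s s' : S) : Prop :=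
  ∃ (g : EuclideanSpace ℝ (Fin n) ≃ₗᵢ[ℝ] EuclideanSpace ℝ (Fin n))
    (σ : Equiv.Perm (Fin k)),
    ∀ i : Fin k, (s : Fin k → EuclideanSpace ℝ (Fin n)) i
      = g ((s' : Fin k → EuclideanSpace ℝ (Fin n)) (σ i))


lemma gram_iso {n k : ℕ} {s s' : Fin k → EuclideanSpace ℝ (Fin n)}
    (h : ∀ i j, ⟪s i, s j⟫ = ⟪s' i, s' j⟫) :
    ∃ g : EuclideanSpace ℝ (Fin n) ≃ₗᵢ[ℝ] EuclideanSpace ℝ (Fin n), ∀ i, s i = g (s' i) := by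
  classical
  let A : (Fin k → ℝ) →ₗ[ℝ] EuclideanSpace ℝ (Fin n) := Fintype.linearCombination ℝ s
  let A' : (Fin k → ℝ) →ₗ[ℝ] EuclideanSpace ℝ (Fin n) := Fintype.linearCombination ℝ s'
  have hAs : ∀ i, A (Pi.single i 1) = s i := by
    intro i
    simp [A, Fintype.linearCombination_apply, Pi.single_apply]
  have hAs' : ∀ i, A' (Pi.single i 1) = s' i := by
    intro i
    simp [A', Fintype.linearCombination_apply, Pi.single_apply]
  have hinner : ∀ c : Fin k → ℝ, ⟪A c, A c⟫ = ⟪A' c, A' c⟫ := by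
    intro c
    simp only [A, A', Fintype.linearCombination_apply, inner_sum, sum_inner,
      real_inner_smul_left, real_inner_smul_right]
    exact Finset.sum_congr rfl fun i _ => Finset.sum_congr rfl fun j _ => by rw [h j i]
  have hnorm : ∀ c : Fin k → ℝ, ‖A c‖ = ‖A' c‖ := by
    intro c
    have := hinner c
    rw [real_inner_self_eq_norm_sq, real_inner_self_eq_norm_sq] at this
    nlinarith [norm_nonneg (A c), norm_nonneg (A' c)]
  have hker : LinearMap.ker A' ≤ LinearMap.ker A := by
    intro c hc
    rw [LinearMap.mem_ker] at hc ⊢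
    have := hnorm c
    rw [hc, norm_zero, norm_eq_zero] at this
    exact this
  let q : ((Fin k → ℝ) ⧸ LinearMap.ker A') →ₗ[ℝ] EuclideanSpace ℝ (Fin n) := (LinearMap.ker A').liftQ A hker
  let e := A'.quotKerEquivRange
  let L0 : LinearMap.range A' →ₗ[ℝ] EuclideanSpace ℝ (Fin n) := q ∘ₗ (e.symm.toLinearMap)
  have hL0 : ∀ (c : Fin k → ℝ), L0 ⟨A' c, LinearMap.mem_range_self A' c⟩ = A c := by
    intro c
    have he : e (Submodule.Quotient.mk c) = ⟨A' c, LinearMap.mem_range_self A' c⟩ := by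
      apply Subtype.ext
      exact A'.quotKerEquivRange_apply_mk c
    have : e.symm ⟨A' c, LinearMap.mem_range_self A' c⟩ = Submodule.Quotient.mk c := by
      rw [← he, e.symm_apply_apply]
    simp only [L0, LinearMap.comp_apply, LinearEquiv.coe_coe, this]
    exact Submodule.liftQ_apply _ _ _
  have hL0norm : ∀ x : LinearMap.range A', ‖L0 x‖ = ‖x‖ := by
    rintro ⟨x, c, rfl⟩
    rw [hL0 c]
    exact (hnorm c).trans rfl
  let L : LinearMap.range A' →ₗᵢ[ℝ] EuclideanSpace ℝ (Fin n) := ⟨L0, hL0norm⟩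
  let g0 : EuclideanSpace ℝ (Fin n) →ₗᵢ[ℝ] EuclideanSpace ℝ (Fin n) := L.extend
  have hg0 : ∀ i, g0 (s' i) = s i := by
    intro i
    have hmem : A' (Pi.single i 1) ∈ LinearMap.range A' := LinearMap.mem_range_self A' _
    have h1 : g0 ((⟨A' (Pi.single i 1), hmem⟩ : LinearMap.range A') :
        EuclideanSpace ℝ (Fin n)) = L ⟨A' (Pi.single i 1), hmem⟩ :=
      L.extend_apply _
    have h2 : (L ⟨A' (Pi.single i 1), hmem⟩ : EuclideanSpace ℝ (Fin n)) = s i := by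
      show L0 _ = s i
      rw [hL0, hAs]
    rw [← hAs' i]
    exact h1.trans h2
  exact ⟨g0.toLinearIsometryEquiv rfl, fun i => by
    rw [← hg0 i]
    rfl⟩


/-- The permutation of `Sym2 α` induced by a permutation of `α`. -/
def sym2Perm {α : Type*} (σ : Equiv.Perm α) : Equiv.Perm (Sym2 α) where
  toFun := Sym2.map σ
  invFun := Sym2.map σ.symm
  left_inv p := by
    rw [Sym2.map_map]
    have : ((σ.symm : α → α) ∘ σ) = id := funext σ.symm_apply_apply
    rw [this, Sym2.map_id, id_eq]
  right_inv p := by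
    rw [Sym2.map_map]
    have : ((σ : α → α) ∘ σ.symm) = id := funext σ.apply_symm_apply
    rw [this, Sym2.map_id, id_eq]

lemma sym2Perm_isDiag_iff {α : Type*} (σ : Equiv.Perm α) (p : Sym2 α) :
    ¬ p.IsDiag ↔ ¬ (sym2Perm σ p).IsDiag := by
  refine not_congr ?_
  induction p using Sym2.ind with
  | _ i j =>
    show Sym2.IsDiag s(i, j) ↔ Sym2.IsDiag (Sym2.map σ s(i, j))
    simp [Sym2.map_pair_eq, Sym2.mk_isDiag_iff, σ.injective.eq_iff]

/-- The homomorphism from permutations of `Fin k` to permutations of off-diagonal pairs. -/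
def permHom (k : ℕ) :
    Equiv.Perm (Fin k) →* Equiv.Perm {p : Sym2 (Fin k) // ¬ p.IsDiag} where
  toFun σ := (sym2Perm σ).subtypePerm (fun p => (sym2Perm_isDiag_iff σ p).symm)
  map_one' := by
    refine Equiv.ext fun p => Subtype.ext ?_
    show (Sym2.map (1 : Equiv.Perm (Fin k)) p.1) = p.1
    induction p.1 using Sym2.ind with
    | _ i j => simp [Sym2.map_pair_eq]
  map_mul' σ τ := by
    refine Equiv.ext fun p => Subtype.ext ?_
    show Sym2.map (σ * τ : Equiv.Perm (Fin k)) p.1 = Sym2.map σ (Sym2.map τ p.1)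
    induction p.1 using Sym2.ind with
    | _ i j => simp [Sym2.map_pair_eq]

lemma permHom_apply_coe {k : ℕ} (σ : Equiv.Perm (Fin k))
    (p : {p : Sym2 (Fin k) // ¬ p.IsDiag}) :
    ((permHom k σ) p : Sym2 (Fin k)) = Sym2.map σ p.1 := rfl

lemma permHom_injective {k : ℕ} (hk : 3 ≤ k) : Function.Injective (permHom k) := by
  rw [← MonoidHom.ker_eq_bot_iff, eq_bot_iff]
  intro σ hσ
  rw [MonoidHom.mem_ker] at hσ
  have key : ∀ i j : Fin k, i ≠ j → Sym2.map σ s(i, j) = s(i, j) := by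
    intro i j hij
    have hnd : ¬ Sym2.IsDiag s(i, j) := by simp [Sym2.mk_isDiag_iff, hij]
    have h1 : (permHom k σ) ⟨s(i, j), hnd⟩ = ⟨s(i, j), hnd⟩ := by rw [hσ]; rfl
    exact congrArg Subtype.val h1
  rw [Subgroup.mem_bot]
  refine Equiv.ext fun i => ?_
  -- find j, l distinct from i and from each other
  have hcard : 2 < Fintype.card (Fin k) := by rw [Fintype.card_fin]; exact hk
  obtain ⟨j, hj⟩ : ∃ j : Fin k, j ≠ i := by
    have h1 : 1 < Fintype.card (Fin k) := by omega
    exact Fintype.exists_ne_of_one_lt_card h1 i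
  obtain ⟨l, hl⟩ : ∃ l : Fin k, l ≠ i ∧ l ≠ j := by
    have : ((Finset.univ.erase i).erase j).Nonempty := by
      apply Finset.card_pos.mp
      have h1 := Finset.card_erase_of_mem (a := j)
        (s := Finset.univ.erase i) (Finset.mem_erase.mpr ⟨hj, Finset.mem_univ j⟩)
      have h2 := Finset.card_erase_of_mem (a := i) (s := (Finset.univ : Finset (Fin k)))
        (Finset.mem_univ i)
      rw [h1, h2]
      simp only [Finset.card_univ, Fintype.card_fin]
      omega
    obtain ⟨l, hl⟩ := this
    rw [Finset.mem_erase, Finset.mem_erase] at hl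
    exact ⟨l, hl.2.1, hl.1⟩
  have e1 := key i j (Ne.symm hj)
  have e2 := key i l (Ne.symm hl.1)
  rw [Sym2.map_pair_eq, Sym2.eq_iff] at e1 e2
  show σ i = i
  rcases e1 with ⟨h1, _⟩ | ⟨h1, _⟩
  · exact h1
  · rcases e2 with ⟨h2, _⟩ | ⟨h2, _⟩
    · exact h2
    · exact absurd (h1.symm.trans h2) hl.2.symm

/-- The symmetric inner-product function on `Sym2`. -/
noncomputable def vfun {n k : ℕ} (s : Fin k → EuclideanSpace ℝ (Fin n)) :
    Sym2 (Fin k) → ℝ :=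
  Sym2.lift ⟨fun i j => ⟪s i, s j⟫, fun i j => real_inner_comm _ _⟩

@[simp] lemma vfun_mk {n k : ℕ} (s : Fin k → EuclideanSpace ℝ (Fin n)) (i j : Fin k) :
    vfun s s(i, j) = ⟪s i, s j⟫ := rfl

/-- For a collision-free tuple `t` of `k ≥ 3` pairwise distinct points lying on a common sphere
of radius `r > 0`, the number of equivalence classes (under orthogonal transformation combined
with relabeling) of tuples of pairwise distinct points with the same second-moment data as `t`
is finite and bounded above by `(k choose 2)! / k!`, read as a rational number. -/
theorem card_classes_le_of_sphere {n k : ℕ} (hk : 3 ≤ k) (r : ℝ) (hr : 0 < r)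
    (t : Fin k → EuclideanSpace ℝ (Fin n))
    (hinj : Function.Injective t) (hsphere : ∀ i : Fin k, ‖t i‖ = r)
    (hcf : IsCollisionFree t) :
    Finite (Quot (EquivRel {s : Fin k → EuclideanSpace ℝ (Fin n) |
      Function.Injective s ∧ SameSecondMoment s t})) ∧
    ((Nat.card (Quot (EquivRel {s : Fin k → EuclideanSpace ℝ (Fin n) |
      Function.Injective s ∧ SameSecondMoment s t})) : ℚ) ≤
      ((k.choose 2).factorial : ℚ) / (k.factorial : ℚ)) := by

  classical
  set S := {s : Fin k → EuclideanSpace ℝ (Fin n) |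
      Function.Injective s ∧ SameSecondMoment s t} with hSdef
  set P := {p : Sym2 (Fin k) // ¬ p.IsDiag} with hPdef
  set G := Equiv.Perm P with hGdef
  set H : Subgroup G := (permHom k).range with hHdef
  -- norms of members of S are all r
  have hnormt : normData t = Multiset.replicate k r := by
    unfold normData
    have : (Finset.univ.val.map fun i => ‖t i‖) = Finset.univ.val.map fun _ : Fin k => r :=
      Multiset.map_congr rfl fun i _ => hsphere i
    rw [this, Multiset.map_const']
    simp
  have hnorms : ∀ s : Fin k → EuclideanSpace ℝ (Fin n), s ∈ S → ∀ i, ‖s i‖ = r := by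
    intro s hs i
    have h1 : normData s = Multiset.replicate k r := hs.2.1.trans hnormt
    have h2 : ‖s i‖ ∈ normData s := Multiset.mem_map_of_mem _ (Finset.mem_univ_val i)
    rw [h1] at h2
    exact Multiset.eq_of_mem_replicate h2
  -- injectivity of the pair function of t on off-diagonal pairs
  have hvt : ∀ p q : Sym2 (Fin k), ¬p.IsDiag → ¬q.IsDiag → vfun t p = vfun t q → p = q := by
    intro p q
    induction p using Sym2.ind with
    | _ i j =>
      induction q using Sym2.ind with
      | _ l m =>
        intro hp hq hv
        rw [Sym2.mk_isDiag_iff] at hp hq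
        rw [vfun_mk, vfun_mk] at hv
        have hgram : ∀ a b : Fin 2, ⟪![t l, t m] a, ![t l, t m] b⟫ = ⟪![t i, t j] a, ![t i, t j] b⟫ := by
          intro a b
          fin_cases a <;> fin_cases b <;>
            simp only [Fin.mk_zero, Fin.mk_one, Matrix.cons_val_zero, Matrix.cons_val_one,
              Matrix.head_cons]
          · rw [real_inner_self_eq_norm_sq, real_inner_self_eq_norm_sq, hsphere, hsphere]
          · exact hv.symm
          · rw [real_inner_comm, ← hv]
            exact real_inner_comm _ _
          · rw [real_inner_self_eq_norm_sq, real_inner_self_eq_norm_sq, hsphere, hsphere]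
        obtain ⟨g, hg⟩ := gram_iso hgram
        have h0 : t l = g (t i) := hg 0
        have h1 : t m = g (t j) := hg 1
        have hset : ({t i, t j} : Set (EuclideanSpace ℝ (Fin n))) = {t l, t m} :=
          hcf i j l m hp hq ⟨g, by rw [← h0, ← h1]⟩
        have hmi : t i = t l ∨ t i = t m := by
          have : t i ∈ ({t l, t m} : Set (EuclideanSpace ℝ (Fin n))) := by
            rw [← hset]; left; rfl
          simpa using this
        have hmj : t j = t l ∨ t j = t m := by
          have : t j ∈ ({t l, t m} : Set (EuclideanSpace ℝ (Fin n))) := by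
            rw [← hset]; right; rfl
          simpa using this
        rcases hmi with hi | hi <;> rcases hmj with hj | hj
        · exact absurd ((hinj hi).trans (hinj hj).symm) hp
        · rw [hinj hi, hinj hj]
        · rw [hinj hi, hinj hj, Sym2.eq_swap]
        · exact absurd ((hinj hi).trans (hinj hj).symm) hp
  -- forward: values of s appear among values of t
  have hfwd : ∀ s : Fin k → EuclideanSpace ℝ (Fin n), s ∈ S →
      ∀ p : Sym2 (Fin k), ¬p.IsDiag →
      ∃ q : Sym2 (Fin k), ¬q.IsDiag ∧ vfun t q = vfun s p := by
    intro s hs p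
    induction p using Sym2.ind with
    | _ i j =>
      intro hp
      rw [Sym2.mk_isDiag_iff] at hp
      have hpd : pairData s = pairData t := hs.2.2
      rcases Ne.lt_or_gt hp with hij | hij
      · have hmem : (Sym2.mk (‖s i‖) (‖s j‖), ⟪s i, s j⟫) ∈ pairData s := ⟨i, j, hij, rfl⟩
        rw [hpd] at hmem
        obtain ⟨l, m, hlm, heq⟩ := hmem
        refine ⟨s(l, m), by simp [Sym2.mk_isDiag_iff, hlm.ne], ?_⟩
        rw [vfun_mk, vfun_mk]
        exact (congrArg Prod.snd heq).symm
      · have hmem : (Sym2.mk (‖s j‖) (‖s i‖), ⟪s j, s i⟫) ∈ pairData s := ⟨j, i, hij, rfl⟩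
        rw [hpd] at hmem
        obtain ⟨l, m, hlm, heq⟩ := hmem
        refine ⟨s(l, m), by simp [Sym2.mk_isDiag_iff, hlm.ne], ?_⟩
        have h2 : ⟪s j, s i⟫ = ⟪t l, t m⟫ := congrArg Prod.snd heq
        rw [vfun_mk, vfun_mk, ← h2]
        exact real_inner_comm _ _
  -- backward: values of t appear among values of s
  have hbwd : ∀ s : Fin k → EuclideanSpace ℝ (Fin n), s ∈ S →
      ∀ q : Sym2 (Fin k), ¬q.IsDiag →
      ∃ p : Sym2 (Fin k), ¬p.IsDiag ∧ vfun s p = vfun t q := by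
    intro s hs q
    induction q using Sym2.ind with
    | _ l m =>
      intro hq
      rw [Sym2.mk_isDiag_iff] at hq
      have hpd : pairData t = pairData s := hs.2.2.symm
      rcases Ne.lt_or_gt hq with hlm | hlm
      · have hmem : (Sym2.mk (‖t l‖) (‖t m‖), ⟪t l, t m⟫) ∈ pairData t := ⟨l, m, hlm, rfl⟩
        rw [hpd] at hmem
        obtain ⟨i, j, hij, heq⟩ := hmem
        refine ⟨s(i, j), by simp [Sym2.mk_isDiag_iff, hij.ne], ?_⟩
        rw [vfun_mk, vfun_mk]
        exact (congrArg Prod.snd heq).symm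
      · have hmem : (Sym2.mk (‖t m‖) (‖t l‖), ⟪t m, t l⟫) ∈ pairData t := ⟨m, l, hlm, rfl⟩
        rw [hpd] at hmem
        obtain ⟨i, j, hij, heq⟩ := hmem
        refine ⟨s(i, j), by simp [Sym2.mk_isDiag_iff, hij.ne], ?_⟩
        have h2 : ⟪t m, t l⟫ = ⟪s i, s j⟫ := congrArg Prod.snd heq
        rw [vfun_mk, vfun_mk, ← h2]
        exact real_inner_comm _ _
  -- the permutation of off-diagonal pairs matching values
  have hβex : ∀ s : ↥S, ∃ β : G, ∀ p : P, vfun t (β p).1 = vfun s.1 p.1 := by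
    intro s
    have hs : s.1 ∈ S := s.2
    have hch : ∀ p : P, ∃ q : Sym2 (Fin k), ¬q.IsDiag ∧ vfun t q = vfun s.1 p.1 :=
      fun p => hfwd s.1 hs p.1 p.2
    let u : P → P := fun p => ⟨(hch p).choose, (hch p).choose_spec.1⟩
    have hu : ∀ p : P, vfun t (u p).1 = vfun s.1 p.1 := fun p => (hch p).choose_spec.2
    have husurj : Function.Surjective u := by
      intro q
      obtain ⟨p, hp, hpv⟩ := hbwd s.1 hs q.1 q.2
      refine ⟨⟨p, hp⟩, ?_⟩
      apply Subtype.ext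
      exact hvt _ _ (u ⟨p, hp⟩).2 q.2 (by rw [hu ⟨p, hp⟩, hpv])
    have hubij : Function.Bijective u := Finite.surjective_iff_bijective.mp husurj
    exact ⟨Equiv.ofBijective u hubij, hu⟩
  let β : ↥S → G := fun s => (hβex s).choose
  have hβ : ∀ (s : ↥S) (p : P), vfun t ((β s) p).1 = vfun s.1 p.1 :=
    fun s => (hβex s).choose_spec
  have βuniq : ∀ β₁ β₂ : G, (∀ p : P, vfun t (β₁ p).1 = vfun t (β₂ p).1) → β₁ = β₂ := by
    intro β₁ β₂ h
    refine Equiv.ext fun p => Subtype.ext ?_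
    exact hvt _ _ (β₁ p).2 (β₂ p).2 (h p)
  -- relation between β of equivalent tuples
  have hrel : ∀ (a b : ↥S) (g : EuclideanSpace ℝ (Fin n) ≃ₗᵢ[ℝ] EuclideanSpace ℝ (Fin n))
      (σ : Equiv.Perm (Fin k)), (∀ i, a.1 i = g (b.1 (σ i))) →
      β a = β b * permHom k σ := by
    intro a b g σ hab
    apply βuniq
    intro p
    rw [hβ a p]
    have hv : vfun a.1 p.1 = vfun b.1 (Sym2.map σ p.1) := by
      induction p.1 using Sym2.ind with
      | _ i j =>
        rw [Sym2.map_pair_eq, vfun_mk, vfun_mk, hab i, hab j]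
        exact g.inner_map_map _ _
    rw [hv]
    have : ((β b * permHom k σ) p).1 = ((β b) ((permHom k σ) p)).1 := rfl
    rw [this, hβ b ((permHom k σ) p), permHom_apply_coe]
  -- the quotient map into G ⧸ H
  have hlift : ∀ a b : ↥S, EquivRel S a b →
      (QuotientGroup.mk (β a) : G ⧸ H) = QuotientGroup.mk (β b) := by
    intro a b ⟨g, σ, hab⟩
    have heq := hrel a b g σ hab
    symm
    rw [QuotientGroup.eq]
    refine ⟨σ, ?_⟩
    rw [heq, inv_mul_cancel_left]
  let F : Quot (EquivRel S) → G ⧸ H := Quot.lift (fun s => QuotientGroup.mk (β s)) hlift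
  have hFinj : Function.Injective F := by
    intro x y hxy
    obtain ⟨a, rfl⟩ := Quot.exists_rep x
    obtain ⟨b, rfl⟩ := Quot.exists_rep y
    have h1 : (QuotientGroup.mk (β a) : G ⧸ H) = QuotientGroup.mk (β b) := hxy
    rw [QuotientGroup.eq] at h1
    obtain ⟨σ, hσ⟩ := h1
    have hβb : β b = β a * permHom k σ := by rw [hσ, mul_inv_cancel_left]
    -- deduce the Gram relation
    have hv : ∀ p : P, vfun b.1 p.1 = vfun a.1 (Sym2.map σ p.1) := by
      intro p
      rw [← hβ b p, hβb]
      have : ((β a * permHom k σ) p).1 = ((β a) ((permHom k σ) p)).1 := rfl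
      rw [this, hβ a ((permHom k σ) p), permHom_apply_coe]
    have hgram : ∀ i j, ⟪b.1 i, b.1 j⟫ = ⟪(fun i => a.1 (σ i)) i, (fun i => a.1 (σ i)) j⟫ := by
      intro i j
      by_cases hij : i = j
      · subst hij
        rw [real_inner_self_eq_norm_sq, real_inner_self_eq_norm_sq,
          hnorms b.1 b.2 i, hnorms a.1 a.2 (σ i)]
      · have hp : ¬ Sym2.IsDiag s(i, j) := by simp [Sym2.mk_isDiag_iff, hij]
        have := hv ⟨s(i, j), hp⟩
        rw [Sym2.map_pair_eq, vfun_mk, vfun_mk] at this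
        exact this
    obtain ⟨g, hg⟩ := gram_iso hgram
    exact ((Quot.sound (⟨g, σ, hg⟩ : EquivRel S b a))).symm
  have hfinq : Finite (G ⧸ H) := Quotient.finite _
  have hfin : Finite (Quot (EquivRel S)) := Finite.of_injective F hFinj
  refine ⟨hfin, ?_⟩
  have hcard : Nat.card (Quot (EquivRel S)) ≤ Nat.card (G ⧸ H) :=
    Nat.card_le_card_of_injective F hFinj
  have hG : Nat.card G = (k.choose 2).factorial := by
    show Nat.card (Equiv.Perm {p : Sym2 (Fin k) // ¬ p.IsDiag}) = (k.choose 2).factorial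
    rw [Nat.card_eq_fintype_card, Fintype.card_perm, Sym2.card_subtype_not_diag,
      Fintype.card_fin]
  have hH : Nat.card H = k.factorial := by
    show Nat.card ((permHom k).range) = k.factorial
    rw [← Nat.card_congr (MonoidHom.ofInjective (permHom_injective hk)).toEquiv,
      Nat.card_eq_fintype_card, Fintype.card_perm, Fintype.card_fin]
  have lag := Subgroup.card_eq_card_quotient_mul_card_subgroup H
  rw [hG, hH] at lag
  have hQ : ((Nat.card (G ⧸ H) : ℚ)) = ((k.choose 2).factorial : ℚ) / (k.factorial : ℚ) := by
    rw [eq_div_iff (by exact_mod_cast k.factorial_ne_zero)]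
    exact_mod_cast lag.symm
  calc ((Nat.card (Quot (EquivRel S)) : ℚ)) ≤ (Nat.card (G ⧸ H) : ℚ) := by exact_mod_cast hcard
    _ = ((k.choose 2).factorial : ℚ) / (k.factorial : ℚ) := hQ
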